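/- Let $p \in (0,1)$ and $q = p' = p/(p-1) < 0$, and let $f : \mathbb{R}^n \to [0,\infty)$ be measurable with $0 < \int_{\mathbb{R}^n} f\, dz < +\infty$. Then for every $x \in \mathbb{R}^n$, $\int_{\mathbb{R}^n} e^{\frac1p\langle x, z\rangle} f(z)^{1/p}\, dz \le \big( \int_{\mathbb{R}^n} f\, dz \big)\, f^\circ\big( \tfrac{x}{1-p} \big)^{1/q}$, with the conventions $\infty^{-1} = 0$ and $0^{1/q} = \infty$ for $q<0$. -/

import Mathlib

open MeasureTheory Real Filter
open scoped ENNReal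

noncomputable section

/-- The polar (dual) function `f°(x) = inf_y exp(-⟨x,y⟩)/f(y)`, valued in `[0,∞]`. -/
def polarFn {n : ℕ} (f : EuclideanSpace ℝ (Fin n) → ℝ) (x : EuclideanSpace ℝ (Fin n)) : ℝ≥0∞ :=
  ⨅ y : EuclideanSpace ℝ (Fin n),
    ENNReal.ofReal (Real.exp (-(inner ℝ x y : ℝ))) / ENNReal.ofReal (f y)

lemma ennreal_rpow_anti {x y : ℝ≥0∞} {r : ℝ} (h : x ≤ y) (hr : r ≤ 0) : y ^ r ≤ x ^ r := by
  have h1 := ENNReal.inv_le_inv.mpr (ENNReal.rpow_le_rpow h (neg_nonneg.mpr hr))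
  rwa [← ENNReal.rpow_neg, ← ENNReal.rpow_neg, neg_neg] at h1

/-- For `0 < p < 1`, `q = p/(p-1)` and `0 < ∫ f < ∞`, the pointwise bound
`∫ e^{⟨x,z⟩/p} f(z)^{1/p} dz ≤ (∫ f) · f°(x/(1-p))^{1/q}`
(with `∞⁻¹ = 0` and `0^{1/q} = ∞` for `q < 0`). -/
theorem expTransform_le_polar (n : ℕ) (hn : 1 ≤ n) (p q : ℝ)
    (hp0 : 0 < p) (hp1 : p < 1) (hq : q = p / (p - 1))
    (f : EuclideanSpace ℝ (Fin n) → ℝ)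
    (hmeas : Measurable f) (hpos : ∀ z, 0 ≤ f z)
    (hlow : 0 < ∫⁻ z, ENNReal.ofReal (f z))
    (hup : (∫⁻ z, ENNReal.ofReal (f z)) < ⊤)
    (x : EuclideanSpace ℝ (Fin n)) :
    (∫⁻ z, ENNReal.ofReal (Real.exp ((1 / p) * (inner ℝ x z : ℝ))) *
        ENNReal.ofReal (f z) ^ (1 / p)) ≤
      (∫⁻ z, ENNReal.ofReal (f z)) * polarFn f ((1 - p)⁻¹ • x) ^ (1 / q) := by
  have hp1' : (0:ℝ) < 1 - p := by linarith
  set u : EuclideanSpace ℝ (Fin n) := (1 - p)⁻¹ • x with hu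
  set c : ℝ≥0∞ := polarFn f u with hc
  have hq0 : q ≠ 0 := by
    rw [hq]; exact div_ne_zero hp0.ne' (by linarith)
  have hqneg : 1 / q < 0 := by
    rw [hq, one_div_div]; exact div_neg_of_neg_of_pos (by linarith) hp0
  have hsum : 1 / p + 1 / q = 1 := by
    rw [hq, one_div_div]; field_simp; ring
  -- key exponent identity: -(1-p)⁻¹ * (1/q) = 1/p
  have hexp : -((1 - p)⁻¹) * (1 / q) = 1 / p := by
    rw [hq, one_div_div]
    field_simp
    ring
  have key : ∀ z, ENNReal.ofReal (Real.exp ((1 / p) * (inner ℝ x z : ℝ))) *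
      ENNReal.ofReal (f z) ^ (1 / p) ≤ ENNReal.ofReal (f z) * c ^ (1 / q) := by
    intro z
    set A := ENNReal.ofReal (f z) with hA
    set E := ENNReal.ofReal (Real.exp (-(inner ℝ u z : ℝ))) with hE
    rcases eq_or_lt_of_le (hpos z) with h0 | h0
    · simp only [hA, ← h0, ENNReal.ofReal_zero,
        ENNReal.zero_rpow_of_pos (by positivity : (0:ℝ) < 1/p), mul_zero, zero_mul, le_refl]
    have hA0 : A ≠ 0 := by simp [hA, h0]
    have hAtop : A ≠ ⊤ := ENNReal.ofReal_ne_top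
    rcases eq_or_ne c 0 with hc0 | hc0
    · rw [hc0, ENNReal.zero_rpow_of_neg hqneg, ENNReal.mul_top hA0]
      exact le_top
    -- the infimum bound at y = z
    have hcle : c ≤ E / A := by
      rw [hc, polarFn]
      exact iInf_le _ z
    have hcA : c * A ≤ E := (ENNReal.le_div_iff_mul_le (Or.inl hA0) (Or.inl hAtop)).mp hcle
    have hEpow : E ^ (1 / q) ≤ (c * A) ^ (1 / q) := ennreal_rpow_anti hcA hqneg.le
    -- compute E ^ (1/q)
    have hinner : (inner ℝ u z : ℝ) = (1 - p)⁻¹ * (inner ℝ x z : ℝ) := by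
      rw [hu, real_inner_smul_left]
    have hEeq : E ^ (1 / q) = ENNReal.ofReal (Real.exp ((1 / p) * (inner ℝ x z : ℝ))) := by
      rw [hE, ENNReal.ofReal_rpow_of_pos (Real.exp_pos _),
        ← Real.exp_log (Real.exp_pos (-(inner ℝ u z : ℝ))),
        ← Real.exp_mul, Real.log_exp, hinner]
      congr 2
      rw [show -((1 - p)⁻¹ * (inner ℝ x z : ℝ)) * (1 / q)
          = (-((1 - p)⁻¹) * (1 / q)) * (inner ℝ x z : ℝ) by ring, hexp]
    have hcAtop : c ≠ ⊤ := by
      intro htop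
      rw [htop] at hcle
      exact (ENNReal.div_lt_top ENNReal.ofReal_ne_top hA0).ne (top_le_iff.mp hcle)
    have hmul : (c * A) ^ (1 / q) = c ^ (1 / q) * A ^ (1 / q) :=
      ENNReal.mul_rpow_of_ne_zero hc0 hA0 _
    calc ENNReal.ofReal (Real.exp ((1 / p) * (inner ℝ x z : ℝ))) * A ^ (1 / p)
        = E ^ (1 / q) * A ^ (1 / p) := by rw [hEeq]
      _ ≤ (c * A) ^ (1 / q) * A ^ (1 / p) := by
          exact mul_le_mul_left hEpow _
      _ = c ^ (1 / q) * (A ^ (1 / q) * A ^ (1 / p)) := by rw [hmul]; ring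
      _ = c ^ (1 / q) * A := by
          rw [← ENNReal.rpow_add _ _ hA0 hAtop, show 1/q + 1/p = 1 by linarith,
            ENNReal.rpow_one]
      _ = A * c ^ (1 / q) := mul_comm _ _
  calc (∫⁻ z, ENNReal.ofReal (Real.exp ((1 / p) * (inner ℝ x z : ℝ))) *
        ENNReal.ofReal (f z) ^ (1 / p))
      ≤ ∫⁻ z, ENNReal.ofReal (f z) * c ^ (1 / q) := lintegral_mono key
    _ = (∫⁻ z, ENNReal.ofReal (f z)) * c ^ (1 / q) :=
        lintegral_mul_const _ hmeas.ennreal_ofReal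

end
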